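/- Define G(t) = t(1 - g(t)) where g(t) = (2/e)(e^{-2t}(t+1)+t-1)/t, i.e. G(t) = t - (2/e)(e^{-2t}(t+1)+t-1). Then for every t ∈ (0,1), exp(t(1 - g(t))) < (2 - t(1 - g(t)))(1 + t). -/

import Mathlib

set_option maxHeartbeats 1000000

noncomputable def g (t : ℝ) : ℝ :=
  (2 / Real.exp 1) * (Real.exp (-2 * t) * (t + 1) + t - 1) / t

private lemma L7_nonneg (t : ℝ) (h0 : 0 ≤ t) (h1 : t ≤ 1) :
    0 ≤ 1 - t + t^2/2 - t^3/6 + t^4/24 - t^5/120 + t^6/720 - t^7/4410 := by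
  have hub : (0:ℝ) ≤ 1 - t := by linarith
  linarith [mul_nonneg (pow_nonneg h0 0) (pow_nonneg hub 7), mul_nonneg (pow_nonneg h0 1) (pow_nonneg hub 6), mul_nonneg (pow_nonneg h0 2) (pow_nonneg hub 5), mul_nonneg (pow_nonneg h0 3) (pow_nonneg hub 4), mul_nonneg (pow_nonneg h0 4) (pow_nonneg hub 3), mul_nonneg (pow_nonneg h0 5) (pow_nonneg hub 2), mul_nonneg (pow_nonneg h0 6) (pow_nonneg hub 1), mul_nonneg (pow_nonneg h0 7) (pow_nonneg hub 0)]

private lemma q_nonneg (t : ℝ) (h0 : 0 ≤ t) (h1 : t ≤ 1) :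
    0 ≤ (2/3)*t^3 - (2/3)*t^4 + (199/500)*t^5 - (8/45)*t^6 + (4/63)*t^7 - (2/105)*t^8 := by
  have hub : (0:ℝ) ≤ 1 - t := by linarith
  linarith [mul_nonneg (pow_nonneg h0 0) (pow_nonneg hub 8), mul_nonneg (pow_nonneg h0 1) (pow_nonneg hub 7), mul_nonneg (pow_nonneg h0 2) (pow_nonneg hub 6), mul_nonneg (pow_nonneg h0 3) (pow_nonneg hub 5), mul_nonneg (pow_nonneg h0 4) (pow_nonneg hub 4), mul_nonneg (pow_nonneg h0 5) (pow_nonneg hub 3), mul_nonneg (pow_nonneg h0 6) (pow_nonneg hub 2), mul_nonneg (pow_nonneg h0 7) (pow_nonneg hub 1), mul_nonneg (pow_nonneg h0 8) (pow_nonneg hub 0)]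

private lemma R_nonneg (t : ℝ) (h0 : 0 ≤ t) (h1 : t ≤ 1) :
    ((2/3)*t^3 - (2/3)*t^4 + (199/500)*t^5 - (8/45)*t^6 + (4/63)*t^7 - (2/105)*t^8) ≤ (1 - t + t^2/2 - t^3/6 + t^4/24 - t^5/120 + t^6/720 - t^7/4410)^2 * (1+t) + t - 1 := by
  have hub : (0:ℝ) ≤ 1 - t := by linarith
  linarith [mul_nonneg (pow_nonneg h0 0) (pow_nonneg hub 15), mul_nonneg (pow_nonneg h0 1) (pow_nonneg hub 14), mul_nonneg (pow_nonneg h0 2) (pow_nonneg hub 13), mul_nonneg (pow_nonneg h0 3) (pow_nonneg hub 12), mul_nonneg (pow_nonneg h0 4) (pow_nonneg hub 11), mul_nonneg (pow_nonneg h0 5) (pow_nonneg hub 10), mul_nonneg (pow_nonneg h0 6) (pow_nonneg hub 9), mul_nonneg (pow_nonneg h0 7) (pow_nonneg hub 8), mul_nonneg (pow_nonneg h0 8) (pow_nonneg hub 7), mul_nonneg (pow_nonneg h0 9) (pow_nonneg hub 6), mul_nonneg (pow_nonneg h0 10) (pow_nonneg hub 5), mul_nonneg (pow_nonneg h0 11)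 (pow_nonneg hub 4), mul_nonneg (pow_nonneg h0 12) (pow_nonneg hub 3), mul_nonneg (pow_nonneg h0 13) (pow_nonneg hub 2), mul_nonneg (pow_nonneg h0 14) (pow_nonneg hub 1), mul_nonneg (pow_nonneg h0 15) (pow_nonneg hub 0)]

private lemma interval_0 (t : ℝ) (ha : (0 : ℝ) ≤ t) (hb : t ≤ ((43 : ℝ)/100)) :
    t - (7357/10000) * ((2/3)*t^3 - (2/3)*t^4 + (199/500)*t^5 - (8/45)*t^6 + (4/63)*t^7 - (2/105)*t^8) ≤ ((2021 : ℝ)/5000) := by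
  have hlo : (0:ℝ) ≤ t - (0 : ℝ) := by linarith
  have hub : (0:ℝ) ≤ ((43 : ℝ)/100) - t := by linarith
  linarith [mul_nonneg (pow_nonneg hlo 0) (pow_nonneg hub 8), mul_nonneg (pow_nonneg hlo 1) (pow_nonneg hub 7), mul_nonneg (pow_nonneg hlo 2) (pow_nonneg hub 6), mul_nonneg (pow_nonneg hlo 3) (pow_nonneg hub 5), mul_nonneg (pow_nonneg hlo 4) (pow_nonneg hub 4), mul_nonneg (pow_nonneg hlo 5) (pow_nonneg hub 3), mul_nonneg (pow_nonneg hlo 6) (pow_nonneg hub 2), mul_nonneg (pow_nonneg hlo 7) (pow_nonneg hub 1), mul_nonneg (pow_nonneg hlo 8) (pow_nonneg hub 0)]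

private lemma interval_1 (t : ℝ) (ha : ((43 : ℝ)/100) ≤ t) (hb : t ≤ ((73 : ℝ)/100)) :
    t - (7357/10000) * ((2/3)*t^3 - (2/3)*t^4 + (199/500)*t^5 - (8/45)*t^6 + (4/63)*t^7 - (2/105)*t^8) ≤ ((396 : ℝ)/625) := by
  have hlo : (0:ℝ) ≤ t - ((43 : ℝ)/100) := by linarith
  have hub : (0:ℝ) ≤ ((73 : ℝ)/100) - t := by linarith
  linarith [mul_nonneg (pow_nonneg hlo 0) (pow_nonneg hub 8), mul_nonneg (pow_nonneg hlo 1) (pow_nonneg hub 7), mul_nonneg (pow_nonneg hlo 2) (pow_nonneg hub 6), mul_nonneg (pow_nonneg hlo 3) (pow_nonneg hub 5), mul_nonneg (pow_nonneg hlo 4) (pow_nonneg hub 4), mul_nonneg (pow_nonneg hlo 5) (pow_nonneg hub 3), mul_nonneg (pow_nonneg hlo 6) (pow_nonneg hub 2), mul_nonneg (pow_nonneg hlo 7) (pow_nonneg hub 1), mul_nonneg (pow_nonneg hlo 8) (pow_nonneg hub 0)]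

private lemma interval_2 (t : ℝ) (ha : ((73 : ℝ)/100) ≤ t) (hb : t ≤ ((9 : ℝ)/10)) :
    t - (7357/10000) * ((2/3)*t^3 - (2/3)*t^4 + (199/500)*t^5 - (8/45)*t^6 + (4/63)*t^7 - (2/105)*t^8) ≤ ((3723 : ℝ)/5000) := by
  have hlo : (0:ℝ) ≤ t - ((73 : ℝ)/100) := by linarith
  have hub : (0:ℝ) ≤ ((9 : ℝ)/10) - t := by linarith
  linarith [mul_nonneg (pow_nonneg hlo 0) (pow_nonneg hub 8), mul_nonneg (pow_nonneg hlo 1) (pow_nonneg hub 7), mul_nonneg (pow_nonneg hlo 2) (pow_nonneg hub 6), mul_nonneg (pow_nonneg hlo 3) (pow_nonneg hub 5), mul_nonneg (pow_nonneg hlo 4) (pow_nonneg hub 4), mul_nonneg (pow_nonneg hlo 5) (pow_nonneg hub 3), mul_nonneg (pow_nonneg hlo 6) (pow_nonneg hub 2), mul_nonneg (pow_nonneg hlo 7) (pow_nonneg hub 1), mul_nonneg (pow_nonneg hlo 8) (pow_nonneg hub 0)]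

private lemma interval_3 (t : ℝ) (ha : ((9 : ℝ)/10) ≤ t) (hb : t ≤ (1 : ℝ)) :
    t - (7357/10000) * ((2/3)*t^3 - (2/3)*t^4 + (199/500)*t^5 - (8/45)*t^6 + (4/63)*t^7 - (2/105)*t^8) ≤ ((8053 : ℝ)/10000) := by
  have hlo : (0:ℝ) ≤ t - ((9 : ℝ)/10) := by linarith
  have hub : (0:ℝ) ≤ (1 : ℝ) - t := by linarith
  linarith [mul_nonneg (pow_nonneg hlo 0) (pow_nonneg hub 8), mul_nonneg (pow_nonneg hlo 1) (pow_nonneg hub 7), mul_nonneg (pow_nonneg hlo 2) (pow_nonneg hub 6), mul_nonneg (pow_nonneg hlo 3) (pow_nonneg hub 5), mul_nonneg (pow_nonneg hlo 4) (pow_nonneg hub 4), mul_nonneg (pow_nonneg hlo 5) (pow_nonneg hub 3), mul_nonneg (pow_nonneg hlo 6) (pow_nonneg hub 2), mul_nonneg (pow_nonneg hlo 7) (pow_nonneg hub 1), mul_nonneg (pow_nonneg hlo 8) (pow_nonneg hub 0)]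

private lemma exp_ub (u : ℝ) (h0 : 0 ≤ u) (h1 : u ≤ 1) :
    Real.exp u ≤ 1 + u + u^2/2 + u^3/6 + u^4/24 + u^5/100 := by
  have h := Real.exp_bound' h0 h1 (n := 5) (by norm_num)
  simp only [Finset.sum_range_succ, Finset.sum_range_zero, Nat.factorial] at h
  norm_num at h
  linarith [h]

private lemma exp_lb (t : ℝ) (h0 : 0 ≤ t) (h1 : t ≤ 1) :
    1 - t + t^2/2 - t^3/6 + t^4/24 - t^5/120 + t^6/720 - t^7/4410 ≤ Real.exp (-t) := by
  have habs : |(-t)| ≤ 1 := by rw [abs_neg, abs_of_nonneg h0]; exact h1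
  have h := Real.exp_bound habs (n := 7) (by norm_num)
  rw [abs_neg, abs_of_nonneg h0] at h
  have h2 := (abs_le.mp h).1
  simp only [Finset.sum_range_succ, Finset.sum_range_zero, Nat.factorial] at h2
  norm_num at h2
  linarith [h2]

theorem stmt_17 (t : ℝ) (ht : t ∈ Set.Ioo (0 : ℝ) 1) :
    Real.exp (t * (1 - g t)) < (2 - t * (1 - g t)) * (1 + t) := by
  obtain ⟨ht0, ht1⟩ := ht
  have ht0' : (0:ℝ) ≤ t := ht0.le
  have ht1' : t ≤ 1 := ht1.le
  have he : (0:ℝ) < Real.exp 1 := Real.exp_pos 1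
  have hG : t * (1 - g t) = t - (2/Real.exp 1) * (Real.exp (-2*t) * (t+1) + t - 1) := by
    unfold g
    field_simp
  -- exp(-2t) lower bound
  have hL := exp_lb t ht0' ht1'
  have hL0 := L7_nonneg t ht0' ht1'
  have hsq : (1 - t + t^2/2 - t^3/6 + t^4/24 - t^5/120 + t^6/720 - t^7/4410)^2
      ≤ Real.exp (-2*t) := by
    have : Real.exp (-2*t) = Real.exp (-t) * Real.exp (-t) := by
      rw [← Real.exp_add]; ring_nf
    rw [this, sq]
    exact mul_le_mul hL hL hL0 (Real.exp_pos _).le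
  have hR := R_nonneg t ht0' ht1'
  have hq0 := q_nonneg t ht0' ht1'
  -- h >= q
  have hhq : (2/3)*t^3 - (2/3)*t^4 + (199/500)*t^5 - (8/45)*t^6 + (4/63)*t^7 - (2/105)*t^8
      ≤ Real.exp (-2*t) * (t+1) + t - 1 := by
    linarith [hR, mul_le_mul_of_nonneg_right hsq (by linarith : (0:ℝ) ≤ t + 1)]
  -- c lower bound
  have hc : (7357/10000 : ℝ) ≤ 2 / Real.exp 1 := by
    rw [le_div_iff₀ he]
    nlinarith [Real.exp_one_lt_d9]
  -- G ≤ U0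
  have hGU : t * (1 - g t) ≤ t - (7357/10000) *
      ((2/3)*t^3 - (2/3)*t^4 + (199/500)*t^5 - (8/45)*t^6 + (4/63)*t^7 - (2/105)*t^8) := by
    rw [hG]
    have hcpos : (0:ℝ) < 2 / Real.exp 1 := by positivity
    linarith [mul_le_mul_of_nonneg_left hhq hcpos.le, mul_le_mul_of_nonneg_right hc hq0]
  set G := t * (1 - g t) with hGdef
  rcases le_or_gt t ((43 : ℝ)/100) with hcase | hcase
  · have hGu : G ≤ ((2021 : ℝ)/5000) := le_trans hGU (interval_0 t (by linarith) (by linarith))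
    have hE : Real.exp G < (2 - ((2021 : ℝ)/5000)) * (1 + (0 : ℝ)) := by
      calc Real.exp G ≤ Real.exp ((2021 : ℝ)/5000) := Real.exp_le_exp.mpr hGu
        _ ≤ 1 + ((2021 : ℝ)/5000) + (((2021 : ℝ)/5000):ℝ)^2/2 + (((2021 : ℝ)/5000):ℝ)^3/6 + (((2021 : ℝ)/5000):ℝ)^4/24 + (((2021 : ℝ)/5000):ℝ)^5/100 :=
            exp_ub _ (by norm_num) (by norm_num)
        _ < (2 - ((2021 : ℝ)/5000)) * (1 + (0 : ℝ)) := by norm_num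
    have h2 : (2 - ((2021 : ℝ)/5000)) * (1 + (0 : ℝ)) ≤ (2 - G) * (1 + t) := by
      nlinarith [hGu, ht0', ht1']
    linarith
  rcases le_or_gt t ((73 : ℝ)/100) with hcase | hcase
  · have hGu : G ≤ ((396 : ℝ)/625) := le_trans hGU (interval_1 t (by linarith) (by linarith))
    have hE : Real.exp G < (2 - ((396 : ℝ)/625)) * (1 + ((43 : ℝ)/100)) := by
      calc Real.exp G ≤ Real.exp ((396 : ℝ)/625) := Real.exp_le_exp.mpr hGu
        _ ≤ 1 + ((396 : ℝ)/625) + (((396 : ℝ)/625):ℝ)^2/2 + (((396 : ℝ)/625):ℝ)^3/6 + (((396 : ℝ)/625):ℝ)^4/24 + (((396 : ℝ)/625):ℝ)^5/100 :=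
            exp_ub _ (by norm_num) (by norm_num)
        _ < (2 - ((396 : ℝ)/625)) * (1 + ((43 : ℝ)/100)) := by norm_num
    have h2 : (2 - ((396 : ℝ)/625)) * (1 + ((43 : ℝ)/100)) ≤ (2 - G) * (1 + t) := by
      nlinarith [hGu, ht0', ht1']
    linarith
  rcases le_or_gt t ((9 : ℝ)/10) with hcase | hcase
  · have hGu : G ≤ ((3723 : ℝ)/5000) := le_trans hGU (interval_2 t (by linarith) (by linarith))
    have hE : Real.exp G < (2 - ((3723 : ℝ)/5000)) * (1 + ((73 : ℝ)/100)) := by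
      calc Real.exp G ≤ Real.exp ((3723 : ℝ)/5000) := Real.exp_le_exp.mpr hGu
        _ ≤ 1 + ((3723 : ℝ)/5000) + (((3723 : ℝ)/5000):ℝ)^2/2 + (((3723 : ℝ)/5000):ℝ)^3/6 + (((3723 : ℝ)/5000):ℝ)^4/24 + (((3723 : ℝ)/5000):ℝ)^5/100 :=
            exp_ub _ (by norm_num) (by norm_num)
        _ < (2 - ((3723 : ℝ)/5000)) * (1 + ((73 : ℝ)/100)) := by norm_num
    have h2 : (2 - ((3723 : ℝ)/5000)) * (1 + ((73 : ℝ)/100)) ≤ (2 - G) * (1 + t) := by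
      nlinarith [hGu, ht0', ht1']
    linarith
  · have hGu : G ≤ ((8053 : ℝ)/10000) := le_trans hGU (interval_3 t (by linarith) (by linarith))
    have hE : Real.exp G < (2 - ((8053 : ℝ)/10000)) * (1 + ((9 : ℝ)/10)) := by
      calc Real.exp G ≤ Real.exp ((8053 : ℝ)/10000) := Real.exp_le_exp.mpr hGu
        _ ≤ 1 + ((8053 : ℝ)/10000) + (((8053 : ℝ)/10000):ℝ)^2/2 + (((8053 : ℝ)/10000):ℝ)^3/6 + (((8053 : ℝ)/10000):ℝ)^4/24 + (((8053 : ℝ)/10000):ℝ)^5/100 :=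
            exp_ub _ (by norm_num) (by norm_num)
        _ < (2 - ((8053 : ℝ)/10000)) * (1 + ((9 : ℝ)/10)) := by norm_num
    have h2 : (2 - ((8053 : ℝ)/10000)) * (1 + ((9 : ℝ)/10)) ≤ (2 - G) * (1 + t) := by
      nlinarith [hGu, ht0', ht1']
    linarith
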